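/- Let A be a complete, cocomplete category with stable monomorphisms and split epimorphisms. Then every diagram in Monad(A) possessing a weakly terminal object has a colimit; in particular, Monad(A) has all coequalizers. -/

import Mathlib

set_option linter.unusedSectionVars false
set_option maxHeartbeats 1000000

open CategoryTheory CategoryTheory.Limits

universe v u

attribute [local instance] uliftCategory

/-- A cocomplete category has *stable monomorphisms* if coproducts of parallel
collections of monomorphisms are monic, and colimits of chains of monomorphisms
consist of monics, with the map induced by any cocone of monics being monic. -/
structure StableMonos (A : Type u) [Category.{v} A] [HasColimits A] : Prop where
  /-- coproducts of parallel collections of monomorphisms are monic -/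
  sigma_map_mono : ∀ {ι : Type v} {X Y : ι → A} (f : ∀ i, X i ⟶ Y i),
    (∀ i, Mono (f i)) → Mono (Limits.Sigma.map f)
  /-- the binary instance of the previous condition -/
  coprod_map_mono : ∀ {X X' Y Y' : A} (f : X ⟶ Y) (g : X' ⟶ Y'),
    Mono f → Mono g → Mono (Limits.coprod.map f g)
  /-- colimits of chains of monomorphisms consist of monics -/
  chain_colimit_mono : ∀ {J : Type v} [LinearOrder J] (D : J ⥤ A),
    (∀ (i j : J) (h : i ⟶ j), Mono (D.map h)) → ∀ j : J, Mono (Limits.colimit.ι D j)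
  /-- the map induced by a cocone of monics on the colimit of a chain of monics is monic -/
  chain_desc_mono : ∀ {J : Type v} [LinearOrder J] (D : J ⥤ A)
    (_ : ∀ (i j : J) (h : i ⟶ j), Mono (D.map h))
    (c : Limits.Cocone D), (∀ j : J, Mono (c.ι.app j)) → Mono (Limits.colimit.desc D c)

namespace Stmt11Scratch


variable {A : Type u} [Category.{v} A] [HasLimits A] [HasColimits A]

section Quot

variable (T : Monad A) (W : Monad.Algebra T) {X : A} (f : X ⟶ W.A)

/-- Free extension of `f` to an algebra map on the free algebra. -/
def fh : (T : A ⥤ A).obj X ⟶ W.A := (T : A ⥤ A).map f ≫ W.a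

lemma fh_alg : (T : A ⥤ A).map (fh T W f) ≫ W.a = T.μ.app X ≫ fh T W f := by
  have nat := T.μ.naturality f
  simp only [Functor.comp_map] at nat
  rw [fh, Functor.map_comp, Category.assoc, ← W.assoc, ← Category.assoc, nat, Category.assoc]

/-- Quotient of `T X` by the kernel pair of `fh`. -/
noncomputable abbrev Bq : A :=
  coequalizer (pullback.fst (fh T W f) (fh T W f)) (pullback.snd (fh T W f) (fh T W f))

noncomputable def pq : (T : A ⥤ A).obj X ⟶ Bq T W f := coequalizer.π _ _

noncomputable def mq : Bq T W f ⟶ W.A := coequalizer.desc (fh T W f) pullback.condition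

lemma pq_mq : pq T W f ≫ mq T W f = fh T W f := coequalizer.π_desc _ _

lemma cancel_pq {Y : A} (α β : Y ⟶ (T : A ⥤ A).obj X)
    (hab : α ≫ fh T W f = β ≫ fh T W f) : α ≫ pq T W f = β ≫ pq T W f := by
  have h1 : pullback.lift α β hab ≫ pullback.fst (fh T W f) (fh T W f) = α :=
    pullback.lift_fst _ _ _
  have h2 : pullback.lift α β hab ≫ pullback.snd (fh T W f) (fh T W f) = β :=
    pullback.lift_snd _ _ _
  calc α ≫ pq T W f
      = (pullback.lift α β hab ≫ pullback.fst (fh T W f) (fh T W f)) ≫ pq T W f := by rw [h1]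
    _ = pullback.lift α β hab ≫ pullback.fst (fh T W f) (fh T W f) ≫ pq T W f :=
        Category.assoc _ _ _
    _ = pullback.lift α β hab ≫ pullback.snd (fh T W f) (fh T W f) ≫ pq T W f := by
        rw [pq, coequalizer.condition]
    _ = (pullback.lift α β hab ≫ pullback.snd (fh T W f) (fh T W f)) ≫ pq T W f :=
        (Category.assoc _ _ _).symm
    _ = β ≫ pq T W f := by rw [h2]

lemma strong_pq : StrongEpi (pq T W f) := by unfold pq; infer_instance

variable (hsplit : ∀ {X Y : A} (f : X ⟶ Y), StrongEpi f → IsSplitEpi f)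

noncomputable def sq : Bq T W f ⟶ (T : A ⥤ A).obj X :=
  ((hsplit (pq T W f) (strong_pq T W f)).exists_splitEpi.some).section_

lemma sq_pq : sq T W f hsplit ≫ pq T W f = 𝟙 _ :=
  ((hsplit (pq T W f) (strong_pq T W f)).exists_splitEpi.some).id

lemma sq_fh : sq T W f hsplit ≫ fh T W f = mq T W f := by
  rw [← pq_mq, ← Category.assoc, sq_pq, Category.id_comp]

lemma k_fh : (pq T W f ≫ sq T W f hsplit) ≫ fh T W f = fh T W f := by
  rw [Category.assoc, sq_fh, pq_mq]

lemma key_pq : ((T : A ⥤ A).map (pq T W f ≫ sq T W f hsplit) ≫ T.μ.app X) ≫ pq T W f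
    = T.μ.app X ≫ pq T W f := by
  apply cancel_pq
  calc ((T : A ⥤ A).map (pq T W f ≫ sq T W f hsplit) ≫ T.μ.app X) ≫ fh T W f
      = (T : A ⥤ A).map (pq T W f ≫ sq T W f hsplit) ≫ (T.μ.app X ≫ fh T W f) :=
        Category.assoc _ _ _
    _ = (T : A ⥤ A).map (pq T W f ≫ sq T W f hsplit) ≫ ((T : A ⥤ A).map (fh T W f) ≫ W.a) := by
        rw [fh_alg]
    _ = ((T : A ⥤ A).map (pq T W f ≫ sq T W f hsplit) ≫ (T : A ⥤ A).map (fh T W f)) ≫ W.a :=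
        (Category.assoc _ _ _).symm
    _ = (T : A ⥤ A).map ((pq T W f ≫ sq T W f hsplit) ≫ fh T W f) ≫ W.a := by
        simp only [Functor.map_comp, Category.assoc]
    _ = (T : A ⥤ A).map (fh T W f) ≫ W.a := by rw [k_fh]
    _ = T.μ.app X ≫ fh T W f := fh_alg T W f

/-- The induced algebra structure on the quotient. -/
noncomputable def bq : (T : A ⥤ A).obj (Bq T W f) ⟶ Bq T W f :=
  (T : A ⥤ A).map (sq T W f hsplit) ≫ T.μ.app X ≫ pq T W f

lemma bq_unit : T.η.app (Bq T W f) ≫ bq T W f hsplit = 𝟙 (Bq T W f) := by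
  have nat := T.η.naturality (sq T W f hsplit)
  simp only [Functor.id_map] at nat
  rw [bq, ← reassoc_of% nat, T.left_unit_assoc, sq_pq]

lemma key_pq2 : (T : A ⥤ A).map (pq T W f) ≫ (T : A ⥤ A).map (sq T W f hsplit) ≫
    T.μ.app X ≫ pq T W f = T.μ.app X ≫ pq T W f := by
  rw [← Category.assoc, ← Category.assoc, ← Functor.map_comp]
  exact key_pq T W f hsplit

lemma bq_assoc : T.μ.app (Bq T W f) ≫ bq T W f hsplit
    = (T : A ⥤ A).map (bq T W f hsplit) ≫ bq T W f hsplit := by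
  have nat := T.μ.naturality (sq T W f hsplit)
  simp only [Functor.comp_map] at nat
  simp only [bq, Functor.map_comp, Category.assoc]
  rw [← reassoc_of% nat, key_pq2, ← reassoc_of% (T.assoc X)]

/-- The quotient algebra. -/
noncomputable def BqAlg : Monad.Algebra T where
  A := Bq T W f
  a := bq T W f hsplit
  unit := bq_unit T W f hsplit
  assoc := bq_assoc T W f hsplit

lemma pq_alg : (T : A ⥤ A).map (pq T W f) ≫ bq T W f hsplit = T.μ.app X ≫ pq T W f := by
  rw [bq]; exact key_pq2 T W f hsplit

lemma mq_alg : (T : A ⥤ A).map (mq T W f) ≫ W.a = bq T W f hsplit ≫ mq T W f := by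
  calc (T : A ⥤ A).map (mq T W f) ≫ W.a
      = (T : A ⥤ A).map (sq T W f hsplit ≫ fh T W f) ≫ W.a := by rw [sq_fh]
    _ = (T : A ⥤ A).map (sq T W f hsplit) ≫ (T : A ⥤ A).map (fh T W f) ≫ W.a := by
        rw [Functor.map_comp, Category.assoc]
    _ = (T : A ⥤ A).map (sq T W f hsplit) ≫ T.μ.app X ≫ fh T W f := by rw [fh_alg]
    _ = (T : A ⥤ A).map (sq T W f hsplit) ≫ T.μ.app X ≫ pq T W f ≫ mq T W f := by rw [pq_mq]
    _ = ((T : A ⥤ A).map (sq T W f hsplit) ≫ T.μ.app X ≫ pq T W f) ≫ mq T W f := by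
        simp only [Category.assoc]
    _ = bq T W f hsplit ≫ mq T W f := by rw [bq]

lemma nat_bq {G : A ⥤ A} (u' v' : G ⟶ (T : A ⥤ A))
    (hW : u'.app W.A ≫ W.a = v'.app W.A ≫ W.a) :
    u'.app (Bq T W f) ≫ bq T W f hsplit = v'.app (Bq T W f) ≫ bq T W f hsplit := by
  have hTX : (u'.app ((T : A ⥤ A).obj X) ≫ T.μ.app X) ≫ pq T W f
      = (v'.app ((T : A ⥤ A).obj X) ≫ T.μ.app X) ≫ pq T W f := by
    apply cancel_pq
    calc (u'.app ((T : A ⥤ A).obj X) ≫ T.μ.app X) ≫ fh T W f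
        = u'.app ((T : A ⥤ A).obj X) ≫ (T : A ⥤ A).map (fh T W f) ≫ W.a := by
          rw [Category.assoc, fh_alg]
      _ = (u'.app ((T : A ⥤ A).obj X) ≫ (T : A ⥤ A).map (fh T W f)) ≫ W.a := by
          rw [Category.assoc]
      _ = (G.map (fh T W f) ≫ u'.app W.A) ≫ W.a := by rw [u'.naturality]
      _ = G.map (fh T W f) ≫ u'.app W.A ≫ W.a := Category.assoc _ _ _
      _ = G.map (fh T W f) ≫ v'.app W.A ≫ W.a := by rw [hW]
      _ = (G.map (fh T W f) ≫ v'.app W.A) ≫ W.a := (Category.assoc _ _ _).symm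
      _ = (v'.app ((T : A ⥤ A).obj X) ≫ (T : A ⥤ A).map (fh T W f)) ≫ W.a := by
          rw [← v'.naturality]
      _ = (v'.app ((T : A ⥤ A).obj X) ≫ T.μ.app X) ≫ fh T W f := by
          rw [Category.assoc, fh_alg, Category.assoc]
  calc u'.app (Bq T W f) ≫ bq T W f hsplit
      = (u'.app (Bq T W f) ≫ (T : A ⥤ A).map (sq T W f hsplit)) ≫ T.μ.app X ≫ pq T W f := by
        rw [bq]; simp only [Category.assoc]
    _ = (G.map (sq T W f hsplit) ≫ u'.app ((T : A ⥤ A).obj X)) ≫ T.μ.app X ≫ pq T W f := by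
        rw [u'.naturality]
    _ = G.map (sq T W f hsplit) ≫ (u'.app ((T : A ⥤ A).obj X) ≫ T.μ.app X) ≫ pq T W f := by
        simp only [Category.assoc]
    _ = G.map (sq T W f hsplit) ≫ (v'.app ((T : A ⥤ A).obj X) ≫ T.μ.app X) ≫ pq T W f := by
        rw [hTX]
    _ = (G.map (sq T W f hsplit) ≫ v'.app ((T : A ⥤ A).obj X)) ≫ T.μ.app X ≫ pq T W f := by
        simp only [Category.assoc]
    _ = (v'.app (Bq T W f) ≫ (T : A ⥤ A).map (sq T W f hsplit)) ≫ T.μ.app X ≫ pq T W f := by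
        rw [← v'.naturality]
    _ = v'.app (Bq T W f) ≫ bq T W f hsplit := by rw [bq]; simp only [Category.assoc]

lemma unit_fh : T.η.app X ≫ fh T W f = f := by
  have nat := T.η.naturality f
  simp only [Functor.id_map] at nat
  rw [fh, ← Category.assoc, ← nat, Category.assoc, W.unit]
  simp

lemma unit_pq_mq : T.η.app X ≫ pq T W f ≫ mq T W f = f := by
  have nat := T.η.naturality f
  simp only [Functor.id_map] at nat
  rw [pq_mq, fh, ← Category.assoc, ← nat, Category.assoc, W.unit]
  simp

end Quot

section JointAlg

variable {J : Type v} [SmallCategory J] (D : J ⥤ Monad A) (t : J)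

def P (W : Monad.Algebra (D.obj t)) : Prop :=
  ∀ (i : J) (u v : i ⟶ t), (D.map u).app W.A ≫ W.a = (D.map v).app W.A ≫ W.a

abbrev S := ObjectProperty.FullSubcategory (P D t)

def U : S D t ⥤ A := ObjectProperty.ι (P D t) ⋙ Monad.forget (D.obj t)

instance : HasLimits (Monad.Algebra (D.obj t)) :=
  ⟨fun _ _ => ⟨fun F => Monad.hasLimit_of_comp_forget_hasLimit F⟩⟩

lemma closedP {J' : Type v} [SmallCategory J'] :
    ObjectProperty.IsClosedUnderLimitsOfShape (P D t) J' := by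
  suffices H : ∀ {F : J' ⥤ _} {c : Cone F}, IsLimit c → (∀ j, P D t (F.obj j)) → P D t c.pt from
    ⟨fun X ⟨h⟩ => H h.isLimit h.prop_diag_obj⟩
  intro F c hc hF
  have hlim := isLimitOfPreserves (Monad.forget (D.obj t)) hc
  intro i u v
  apply hlim.hom_ext
  intro j
  have hj : c.pt.a ≫ (c.π.app j).f
      = ((D.obj t) : A ⥤ A).map (c.π.app j).f ≫ (F.obj j).a := ((c.π.app j).h).symm
  have nu := (D.map u).naturality (c.π.app j).f
  have nv := (D.map v).naturality (c.π.app j).f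
  simp only [Functor.const_obj_obj] at nu nv
  show ((D.map u).app c.pt.A ≫ c.pt.a) ≫ (c.π.app j).f
      = ((D.map v).app c.pt.A ≫ c.pt.a) ≫ (c.π.app j).f
  rw [Category.assoc, Category.assoc]
  rw [hj, ← Category.assoc, ← nu, ← Category.assoc, ← nv,
    Category.assoc, Category.assoc, hF j i u v]

instance : HasLimits (S D t) :=
  ⟨fun J' _ => by haveI := closedP D t (J' := J'); infer_instance⟩

noncomputable instance : CreatesLimitsOfSize.{v, v} (ObjectProperty.ι (P D t)) :=
  ⟨fun {J'} _ => by haveI := closedP D t (J' := J'); infer_instance⟩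

noncomputable instance : PreservesLimitsOfSize.{v, v} (Monad.forget (D.obj t)) :=
  (Monad.adj (D.obj t)).rightAdjoint_preservesLimits

noncomputable instance UPreservesLimits : PreservesLimitsOfSize.{v, v} (U D t) := by
  have : PreservesLimitsOfSize.{v, v} (ObjectProperty.ι (P D t)) :=
    preservesLimits_of_createsLimits_and_hasLimits _
  show PreservesLimitsOfSize.{v, v} (ObjectProperty.ι (P D t) ⋙ Monad.forget (D.obj t))
  infer_instance

/-- The splitting data recorded by an endomorphism of the free algebra carrier. -/
def Q (X : A) (k : ((D.obj t) : A ⥤ A).obj X ⟶ ((D.obj t) : A ⥤ A).obj X) : Prop :=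
  ∃ (B : S D t) (p' : ((D.obj t) : A ⥤ A).obj X ⟶ B.obj.A)
    (s' : B.obj.A ⟶ ((D.obj t) : A ⥤ A).obj X),
      (((D.obj t) : A ⥤ A).map p' ≫ B.obj.a = (D.obj t).μ.app X ≫ p') ∧
      (s' ≫ p' = 𝟙 _) ∧ (p' ≫ s' = k)

lemma factor_through (hsplit : ∀ {X Y : A} (f : X ⟶ Y), StrongEpi f → IsSplitEpi f)
    (X : A) (W : S D t) (f : X ⟶ (U D t).obj W) (B0 : S D t)
    (p0 : ((D.obj t) : A ⥤ A).obj X ⟶ B0.obj.A)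
    (s0 : B0.obj.A ⟶ ((D.obj t) : A ⥤ A).obj X)
    (halg : ((D.obj t) : A ⥤ A).map p0 ≫ B0.obj.a = (D.obj t).μ.app X ≫ p0)
    (hsec : s0 ≫ p0 = 𝟙 _)
    (hretr : p0 ≫ s0 = pq (D.obj t) W.obj f ≫ sq (D.obj t) W.obj f hsplit) :
    ∃ (g : B0 ⟶ W), ((D.obj t).η.app X ≫ p0) ≫ (U D t).map g = f := by
  set T : Monad A := D.obj t with hT
  have hks : p0 ≫ s0 ≫ fh T W.obj f = fh T W.obj f := by
    rw [← Category.assoc, hretr]; exact k_fh T W.obj f hsplit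
  have hBa : B0.obj.a = (T : A ⥤ A).map s0 ≫ T.μ.app X ≫ p0 := by
    have h1 : (T : A ⥤ A).map (s0 ≫ p0) = 𝟙 _ := by
      rw [hsec, CategoryTheory.Functor.map_id]
    calc B0.obj.a = (T : A ⥤ A).map (s0 ≫ p0) ≫ B0.obj.a := by rw [h1, Category.id_comp]
      _ = (T : A ⥤ A).map s0 ≫ (T : A ⥤ A).map p0 ≫ B0.obj.a := by
          rw [Functor.map_comp, Category.assoc]
      _ = (T : A ⥤ A).map s0 ≫ T.μ.app X ≫ p0 := by rw [halg]
  have galg : (T : A ⥤ A).map (s0 ≫ fh T W.obj f) ≫ W.obj.a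
      = B0.obj.a ≫ s0 ≫ fh T W.obj f := by
    calc (T : A ⥤ A).map (s0 ≫ fh T W.obj f) ≫ W.obj.a
        = (T : A ⥤ A).map s0 ≫ (T : A ⥤ A).map (fh T W.obj f) ≫ W.obj.a := by
          rw [Functor.map_comp, Category.assoc]
      _ = (T : A ⥤ A).map s0 ≫ T.μ.app X ≫ fh T W.obj f :=
          congrArg (fun q => (T : A ⥤ A).map s0 ≫ q) (fh_alg T W.obj f)
      _ = (T : A ⥤ A).map s0 ≫ T.μ.app X ≫ p0 ≫ s0 ≫ fh T W.obj f := by rw [hks]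
      _ = ((T : A ⥤ A).map s0 ≫ T.μ.app X ≫ p0) ≫ s0 ≫ fh T W.obj f := by
          simp only [Category.assoc]
      _ = B0.obj.a ≫ s0 ≫ fh T W.obj f := by rw [hBa]
  refine ⟨ObjectProperty.homMk { f := s0 ≫ fh T W.obj f, h := galg }, ?_⟩
  show (T.η.app X ≫ p0) ≫ s0 ≫ fh T W.obj f = f
  rw [Category.assoc, hks]; exact unit_fh T W.obj f

lemma solution (hsplit : ∀ {X Y : A} (f : X ⟶ Y), StrongEpi f → IsSplitEpi f) (X : A) :
    ∃ (ι : Type v) (B : ι → S D t) (ff : ∀ i, X ⟶ (U D t).obj (B i)),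
      ∀ (W : S D t) (h : X ⟶ (U D t).obj W), ∃ (i : _) (g : B i ⟶ W),
        ff i ≫ (U D t).map g = h := by
  classical
  refine ⟨{k : ((D.obj t) : A ⥤ A).obj X ⟶ ((D.obj t) : A ⥤ A).obj X // Q D t X k},
    fun i => i.2.choose, fun i => (D.obj t).η.app X ≫ i.2.choose_spec.choose, ?_⟩
  intro W f
  have hP : P D t (BqAlg (D.obj t) W.obj f hsplit) := by
    intro i u v
    exact nat_bq (D.obj t) W.obj f hsplit (D.map u).toNatTrans (D.map v).toNatTrans
      (W.property i u v)
  have hQ : Q D t X (pq (D.obj t) W.obj f ≫ sq (D.obj t) W.obj f hsplit) :=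
    ⟨⟨BqAlg (D.obj t) W.obj f hsplit, hP⟩, pq (D.obj t) W.obj f, sq (D.obj t) W.obj f hsplit,
      pq_alg (D.obj t) W.obj f hsplit, sq_pq (D.obj t) W.obj f hsplit, rfl⟩
  exact ⟨⟨pq (D.obj t) W.obj f ≫ sq (D.obj t) W.obj f hsplit, hQ⟩,
    factor_through D t hsplit X W f hQ.choose hQ.choose_spec.choose
      hQ.choose_spec.choose_spec.choose
      hQ.choose_spec.choose_spec.choose_spec.1
      hQ.choose_spec.choose_spec.choose_spec.2.1
      hQ.choose_spec.choose_spec.choose_spec.2.2⟩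

lemma U_isRightAdjoint (hsplit : ∀ {X Y : A} (f : X ⟶ Y), StrongEpi f → IsSplitEpi f) :
    (U D t).IsRightAdjoint := by
  let e : A ≌ ULift.{v} A := ULift.equivalence
  haveI : HasLimits (ULift.{v} A) := Adjunction.has_limits_of_equivalence e.inverse
  haveI : PreservesLimitsOfSize.{v, v} e.functor :=
    e.symm.toAdjunction.rightAdjoint_preservesLimits
  haveI : PreservesLimitsOfSize.{v, v} (U D t ⋙ e.functor) := by infer_instance
  have ssc : SolutionSetCondition (U D t ⋙ e.functor) := by
    intro A₀
    obtain ⟨ι, B, ff, hfac⟩ := solution D t hsplit A₀.down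
    refine ⟨ι, B, fun i => (ff i : A₀ ⟶ (U D t ⋙ e.functor).obj (B i)), ?_⟩
    intro W h
    obtain ⟨i, gg, hg⟩ := hfac W (h : A₀.down ⟶ (U D t).obj W)
    exact ⟨i, gg, hg⟩
  haveI : (U D t ⋙ e.functor).IsRightAdjoint :=
    isRightAdjoint_of_preservesLimits_of_solutionSetCondition _ ssc
  have iso : (U D t ⋙ e.functor) ⋙ e.inverse ≅ U D t :=
    Functor.associator _ _ _ ≪≫ Functor.isoWhiskerLeft (U D t) e.unitIso.symm ≪≫
      (U D t).rightUnitor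
  exact ⟨_, ⟨(e.toAdjunction.comp
    (Adjunction.ofIsRightAdjoint (U D t ⋙ e.functor))).ofNatIsoRight iso⟩⟩

end JointAlg


section Colim

variable {J : Type v} [SmallCategory J] (D : J ⥤ Monad A) (t : J) (g : ∀ i : J, i ⟶ t)
variable (LL : A ⥤ S D t) (adj : LL ⊣ U D t)

/-- The `T`-algebra structure on the free joint algebra. -/
abbrev tau (Z : A) : ((D.obj t) : A ⥤ A).obj ((U D t).obj (LL.obj Z)) ⟶ (U D t).obj (LL.obj Z) :=
  (LL.obj Z).obj.a

/-- Component of the colimit cocone leg. -/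
def capp (i : J) (Z : A) : ((D.obj i) : A ⥤ A).obj Z ⟶ (U D t).obj (LL.obj Z) :=
  ((D.obj i) : A ⥤ A).map (adj.unit.app Z) ≫
    (D.map (g i)).app ((U D t).obj (LL.obj Z)) ≫ tau D t LL Z

lemma LLmap_alg {Z Z' : A} (φ : Z ⟶ Z') :
    ((D.obj t) : A ⥤ A).map ((U D t).map (LL.map φ)) ≫ tau D t LL Z'
      = tau D t LL Z ≫ (U D t).map (LL.map φ) := (LL.map φ).hom.h

lemma counit_alg (Z : A) :
    ((D.obj t) : A ⥤ A).map ((U D t).map (adj.counit.app (LL.obj Z))) ≫ tau D t LL Z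
      = tau D t LL ((U D t).obj (LL.obj Z)) ≫ (U D t).map (adj.counit.app (LL.obj Z)) :=
  (adj.counit.app (LL.obj Z)).hom.h

lemma tau_unit (Z : A) :
    (D.obj t).η.app ((U D t).obj (LL.obj Z)) ≫ tau D t LL Z = 𝟙 _ := (LL.obj Z).obj.unit

lemma tau_assoc (Z : A) :
    (D.obj t).μ.app ((U D t).obj (LL.obj Z)) ≫ tau D t LL Z
      = ((D.obj t) : A ⥤ A).map (tau D t LL Z) ≫ tau D t LL Z := (LL.obj Z).obj.assoc

lemma hom_ext_unit {Z : A} {B : S D t} (q r : LL.obj Z ⟶ B)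
    (h : adj.unit.app Z ≫ (U D t).map q = adj.unit.app Z ≫ (U D t).map r) : q = r := by
  apply (adj.homEquiv Z B).injective
  rw [adj.homEquiv_unit, adj.homEquiv_unit]
  exact h

lemma capp_nat (i : J) {Z Z' : A} (φ : Z ⟶ Z') :
    ((D.obj i) : A ⥤ A).map φ ≫ capp D t g LL adj i Z'
      = capp D t g LL adj i Z ≫ (U D t).map (LL.map φ) := by
  have hu : φ ≫ adj.unit.app Z' = adj.unit.app Z ≫ (U D t).map (LL.map φ) :=
    adj.unit.naturality φ
  have hnat : ((D.obj i) : A ⥤ A).map ((U D t).map (LL.map φ)) ≫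
      (D.map (g i)).app ((U D t).obj (LL.obj Z'))
      = (D.map (g i)).app ((U D t).obj (LL.obj Z)) ≫
        ((D.obj t) : A ⥤ A).map ((U D t).map (LL.map φ)) :=
    (D.map (g i)).naturality _
  simp only [capp, Category.assoc]
  rw [← Functor.map_comp_assoc, hu, Functor.map_comp_assoc, reassoc_of% hnat,
    LLmap_alg D t LL φ]

lemma capp_eta (i : J) (Z : A) :
    (D.obj i).η.app Z ≫ capp D t g LL adj i Z = adj.unit.app Z := by
  have hn : adj.unit.app Z ≫ (D.obj i).η.app ((U D t).obj (LL.obj Z))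
      = (D.obj i).η.app Z ≫ ((D.obj i) : A ⥤ A).map (adj.unit.app Z) :=
    (D.obj i).η.naturality (adj.unit.app Z)
  have happη : (D.obj i).η.app ((U D t).obj (LL.obj Z)) ≫
      (D.map (g i)).app ((U D t).obj (LL.obj Z))
      = (D.obj t).η.app ((U D t).obj (LL.obj Z)) := (D.map (g i)).app_η _
  simp only [capp]
  rw [← reassoc_of% hn, reassoc_of% happη, tau_unit]
  simp

lemma capp_mu (i : J) (Z : A) :
    (D.obj i).μ.app Z ≫ capp D t g LL adj i Z
      = (((D.obj i) : A ⥤ A).map (capp D t g LL adj i Z) ≫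
          capp D t g LL adj i ((U D t).obj (LL.obj Z))) ≫
          (U D t).map (adj.counit.app (LL.obj Z)) := by
  have hμ : ((D.obj i) : A ⥤ A).map (((D.obj i) : A ⥤ A).map (adj.unit.app Z)) ≫
      (D.obj i).μ.app ((U D t).obj (LL.obj Z))
      = (D.obj i).μ.app Z ≫ ((D.obj i) : A ⥤ A).map (adj.unit.app Z) :=
    (D.obj i).μ.naturality _
  have happμ : (D.obj i).μ.app ((U D t).obj (LL.obj Z)) ≫
      (D.map (g i)).app ((U D t).obj (LL.obj Z))
      = (((D.obj i) : A ⥤ A).map ((D.map (g i)).app ((U D t).obj (LL.obj Z))) ≫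
          (D.map (g i)).app (((D.obj t) : A ⥤ A).obj ((U D t).obj (LL.obj Z)))) ≫
          (D.obj t).μ.app ((U D t).obj (LL.obj Z)) :=
    (D.map (g i)).app_μ _
  have hnat : ((D.obj i) : A ⥤ A).map (tau D t LL Z) ≫
      (D.map (g i)).app ((U D t).obj (LL.obj Z))
      = (D.map (g i)).app (((D.obj t) : A ⥤ A).obj ((U D t).obj (LL.obj Z))) ≫
        ((D.obj t) : A ⥤ A).map (tau D t LL Z) :=
    (D.map (g i)).naturality _
  have htri : adj.unit.app ((U D t).obj (LL.obj Z)) ≫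
      (U D t).map (adj.counit.app (LL.obj Z)) = 𝟙 ((U D t).obj (LL.obj Z)) :=
    adj.right_triangle_components (LL.obj Z)
  have hcounit := counit_alg D t LL adj Z
  have hn2 : ((D.obj i) : A ⥤ A).map ((U D t).map (adj.counit.app (LL.obj Z))) ≫
      (D.map (g i)).app ((U D t).obj (LL.obj Z))
      = (D.map (g i)).app ((U D t).obj (LL.obj ((U D t).obj (LL.obj Z)))) ≫
        ((D.obj t) : A ⥤ A).map ((U D t).map (adj.counit.app (LL.obj Z))) :=
    (D.map (g i)).naturality _
  simp only [capp, Category.assoc, Functor.map_comp]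
  rw [← hcounit, ← reassoc_of% hn2]
  have hcol : ((D.obj i) : A ⥤ A).map (adj.unit.app ((U D t).obj (LL.obj Z))) ≫
      ((D.obj i) : A ⥤ A).map ((U D t).map (adj.counit.app (LL.obj Z))) ≫
      (D.map (g i)).app ((U D t).obj (LL.obj Z)) ≫ tau D t LL Z
      = (D.map (g i)).app ((U D t).obj (LL.obj Z)) ≫ tau D t LL Z := by
    rw [← Functor.map_comp_assoc, htri]
    simp
  rw [hcol, ← reassoc_of% hμ, reassoc_of% happμ, tau_assoc, ← reassoc_of% hnat]

/-- The legs of the colimit cocone, as monad morphisms. -/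
def cHom (i : J) : D.obj i ⟶ adj.toMonad where
  app Z := capp D t g LL adj i Z
  naturality _ _ φ := capp_nat D t g LL adj i φ
  app_η Z := capp_eta D t g LL adj i Z
  app_μ Z := capp_mu D t g LL adj i Z

lemma cHom_w {i j : J} (u : i ⟶ j) : D.map u ≫ cHom D t g LL adj j = cHom D t g LL adj i := by
  apply MonadHom.ext'
  funext Z
  show (D.map u).app Z ≫ capp D t g LL adj j Z = capp D t g LL adj i Z
  have hn : ((D.obj i) : A ⥤ A).map (adj.unit.app Z) ≫
        (D.map u).app ((U D t).obj (LL.obj Z))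
      = (D.map u).app Z ≫ ((D.obj j) : A ⥤ A).map (adj.unit.app Z) :=
    (D.map u).naturality _
  simp only [capp]
  rw [← Category.assoc, ← hn, Category.assoc]
  have hcomp : (D.map u).app ((U D t).obj (LL.obj Z)) ≫
      (D.map (g j)).app ((U D t).obj (LL.obj Z)) ≫ tau D t LL Z
      = (D.map (g i)).app ((U D t).obj (LL.obj Z)) ≫ tau D t LL Z := by
    have h1 : (D.map (u ≫ g j)).app ((U D t).obj (LL.obj Z))
        = (D.map u).app ((U D t).obj (LL.obj Z)) ≫
          (D.map (g j)).app ((U D t).obj (LL.obj Z)) := by rw [D.map_comp]; rfl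
    rw [← Category.assoc, ← h1]
    exact (LL.obj Z).property i (u ≫ g j) (g i)
  rw [hcomp]

/-- The colimit cocone. -/
def coconeD : Cocone D where
  pt := adj.toMonad
  ι := { app := fun i => cHom D t g LL adj i
         naturality := fun i j u => by
           rw [cHom_w D t g LL adj u]
           exact (Category.comp_id _).symm }

end Colim


section Desc

variable {J : Type v} [SmallCategory J]

/-- The joint algebra structure on free `N`-algebras. -/
def NAlgObj (D : J ⥤ Monad A) (t : J) (N : Monad A) (d : ∀ i : J, D.obj i ⟶ N) (Z : A) :
    Monad.Algebra (D.obj t) where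
  A := (N : A ⥤ A).obj Z
  a := (d t).app ((N : A ⥤ A).obj Z) ≫ N.μ.app Z
  unit := by
    rw [← Category.assoc, (d t).app_η]
    exact N.left_unit Z
  assoc := by
    have happμ : (D.obj t).μ.app ((N : A ⥤ A).obj Z) ≫ (d t).app ((N : A ⥤ A).obj Z)
        = (((D.obj t) : A ⥤ A).map ((d t).app ((N : A ⥤ A).obj Z)) ≫
            (d t).app ((N : A ⥤ A).obj ((N : A ⥤ A).obj Z))) ≫
            N.μ.app ((N : A ⥤ A).obj Z) := (d t).app_μ _
    have hnat : ((D.obj t) : A ⥤ A).map (N.μ.app Z) ≫ (d t).app ((N : A ⥤ A).obj Z)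
        = (d t).app ((N : A ⥤ A).obj ((N : A ⥤ A).obj Z)) ≫ (N : A ⥤ A).map (N.μ.app Z) :=
      (d t).naturality _
    have hNassoc : (N : A ⥤ A).map (N.μ.app Z) ≫ N.μ.app Z
        = N.μ.app ((N : A ⥤ A).obj Z) ≫ N.μ.app Z := N.assoc Z
    show (D.obj t).μ.app ((N : A ⥤ A).obj Z) ≫ (d t).app ((N : A ⥤ A).obj Z) ≫ N.μ.app Z
        = ((D.obj t) : A ⥤ A).map ((d t).app ((N : A ⥤ A).obj Z) ≫ N.μ.app Z) ≫
          (d t).app ((N : A ⥤ A).obj Z) ≫ N.μ.app Z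
    rw [← Category.assoc, happμ]
    simp only [Category.assoc]
    rw [← hNassoc, ← reassoc_of% hnat]
    simp only [Functor.map_comp, Category.assoc]

lemma d_app_comp (D : J ⥤ Monad A) (N : Monad A) (d : ∀ i : J, D.obj i ⟶ N)
    (hd : ∀ {i j : J} (u : i ⟶ j), D.map u ≫ d j = d i)
    {i j : J} (u : i ⟶ j) (W : A) :
    (D.map u).app W ≫ (d j).app W = (d i).app W := by
  have h2 : (D.map u ≫ d j).app W = (d i).app W := by rw [hd u]
  exact h2

lemma NP (D : J ⥤ Monad A) (t : J) (N : Monad A) (d : ∀ i : J, D.obj i ⟶ N)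
    (hd : ∀ {i j : J} (u : i ⟶ j), D.map u ≫ d j = d i) (Z : A) :
    P D t (NAlgObj D t N d Z) := by
  intro i u v
  have h1 := d_app_comp D N d hd u ((N : A ⥤ A).obj Z)
  have h2 := d_app_comp D N d hd v ((N : A ⥤ A).obj Z)
  show (D.map u).app ((N : A ⥤ A).obj Z) ≫ (d t).app ((N : A ⥤ A).obj Z) ≫ N.μ.app Z
      = (D.map v).app ((N : A ⥤ A).obj Z) ≫ (d t).app ((N : A ⥤ A).obj Z) ≫ N.μ.app Z
  rw [← Category.assoc, h1, ← Category.assoc, h2]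

/-- The joint algebra on `N Z` as an object of `S`. -/
def NAlgS (D : J ⥤ Monad A) (t : J) (N : Monad A) (d : ∀ i : J, D.obj i ⟶ N)
    (hd : ∀ {i j : J} (u : i ⟶ j), D.map u ≫ d j = d i) (Z : A) : S D t :=
  ⟨NAlgObj D t N d Z, NP D t N d hd Z⟩

/-- `N.μ` as a morphism of joint algebras. -/
def muNS (D : J ⥤ Monad A) (t : J) (N : Monad A) (d : ∀ i : J, D.obj i ⟶ N)
    (hd : ∀ {i j : J} (u : i ⟶ j), D.map u ≫ d j = d i) (Z : A) :
    NAlgS D t N d hd ((N : A ⥤ A).obj Z) ⟶ NAlgS D t N d hd Z where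
  hom.f := N.μ.app Z
  hom.h := by
    have hnat : ((D.obj t) : A ⥤ A).map (N.μ.app Z) ≫ (d t).app ((N : A ⥤ A).obj Z)
        = (d t).app ((N : A ⥤ A).obj ((N : A ⥤ A).obj Z)) ≫ (N : A ⥤ A).map (N.μ.app Z) :=
      (d t).naturality _
    have hNassoc : (N : A ⥤ A).map (N.μ.app Z) ≫ N.μ.app Z
        = N.μ.app ((N : A ⥤ A).obj Z) ≫ N.μ.app Z := N.assoc Z
    show ((D.obj t) : A ⥤ A).map (N.μ.app Z) ≫ (d t).app ((N : A ⥤ A).obj Z) ≫ N.μ.app Z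
        = ((d t).app ((N : A ⥤ A).obj ((N : A ⥤ A).obj Z)) ≫
            N.μ.app ((N : A ⥤ A).obj Z)) ≫ N.μ.app Z
    rw [← Category.assoc, hnat, Category.assoc, hNassoc]
    simp only [Category.assoc]

/-- `N.map φ` as a morphism of joint algebras. -/
def NmapS (D : J ⥤ Monad A) (t : J) (N : Monad A) (d : ∀ i : J, D.obj i ⟶ N)
    (hd : ∀ {i j : J} (u : i ⟶ j), D.map u ≫ d j = d i) {Z Z' : A} (φ : Z ⟶ Z') :
    NAlgS D t N d hd Z ⟶ NAlgS D t N d hd Z' where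
  hom.f := (N : A ⥤ A).map φ
  hom.h := by
    have hnat : ((D.obj t) : A ⥤ A).map ((N : A ⥤ A).map φ) ≫
        (d t).app ((N : A ⥤ A).obj Z')
        = (d t).app ((N : A ⥤ A).obj Z) ≫ (N : A ⥤ A).map ((N : A ⥤ A).map φ) :=
      (d t).naturality _
    have hμn : (N : A ⥤ A).map ((N : A ⥤ A).map φ) ≫ N.μ.app Z'
        = N.μ.app Z ≫ (N : A ⥤ A).map φ := N.μ.naturality φ
    show ((D.obj t) : A ⥤ A).map ((N : A ⥤ A).map φ) ≫
        (d t).app ((N : A ⥤ A).obj Z') ≫ N.μ.app Z'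
        = ((d t).app ((N : A ⥤ A).obj Z) ≫ N.μ.app Z) ≫ (N : A ⥤ A).map φ
    rw [← Category.assoc, hnat, Category.assoc, hμn]
    simp only [Category.assoc]

variable (D : J ⥤ Monad A) (t : J) (g : ∀ i : J, i ⟶ t)
variable (LL : A ⥤ S D t) (adj : LL ⊣ U D t)
variable (N : Monad A) (d : ∀ i : J, D.obj i ⟶ N)
variable (hd : ∀ {i j : J} (u : i ⟶ j), D.map u ≫ d j = d i)

/-- The transpose of the unit of `N`. -/
noncomputable def phihat (Z : A) : LL.obj Z ⟶ NAlgS D t N d hd Z :=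
  (adj.homEquiv Z (NAlgS D t N d hd Z)).symm (N.η.app Z)

/-- The underlying map of `phihat`. -/
noncomputable def phiapp (Z : A) : (U D t).obj (LL.obj Z) ⟶ (N : A ⥤ A).obj Z :=
  (U D t).map (phihat D t LL adj N d hd Z)

lemma unit_phihat (Z : A) :
    adj.unit.app Z ≫ phiapp D t LL adj N d hd Z = N.η.app Z := by
  have h := (adj.homEquiv Z (NAlgS D t N d hd Z)).apply_symm_apply (N.η.app Z)
  rw [adj.homEquiv_unit] at h
  exact h

lemma phihat_alg (Z : A) :
    ((D.obj t) : A ⥤ A).map (phiapp D t LL adj N d hd Z) ≫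
      ((d t).app ((N : A ⥤ A).obj Z) ≫ N.μ.app Z)
      = tau D t LL Z ≫ phiapp D t LL adj N d hd Z :=
  (phihat D t LL adj N d hd Z).hom.h

lemma phihat_natural {Z Z' : A} (φ : Z ⟶ Z') :
    LL.map φ ≫ phihat D t LL adj N d hd Z'
      = phihat D t LL adj N d hd Z ≫ NmapS D t N d hd φ := by
  apply hom_ext_unit D t LL adj
  have hu : φ ≫ adj.unit.app Z' = adj.unit.app Z ≫ (U D t).map (LL.map φ) :=
    adj.unit.naturality φ
  have hη : φ ≫ N.η.app Z' = N.η.app Z ≫ (N : A ⥤ A).map φ := N.η.naturality φ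
  show adj.unit.app Z ≫ (U D t).map (LL.map φ) ≫ phiapp D t LL adj N d hd Z'
      = adj.unit.app Z ≫ phiapp D t LL adj N d hd Z ≫ (N : A ⥤ A).map φ
  rw [← Category.assoc, ← hu, Category.assoc, unit_phihat, ← Category.assoc,
    unit_phihat, ← hη]

lemma phi_nat {Z Z' : A} (φ : Z ⟶ Z') :
    (U D t).map (LL.map φ) ≫ phiapp D t LL adj N d hd Z'
      = phiapp D t LL adj N d hd Z ≫ (N : A ⥤ A).map φ := by
  have h := congrArg (fun q => (U D t).map q) (phihat_natural D t LL adj N d hd φ)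
  simp only [Functor.map_comp] at h
  exact h

lemma phihat_mu (Z : A) :
    adj.counit.app (LL.obj Z) ≫ phihat D t LL adj N d hd Z
      = LL.map (phiapp D t LL adj N d hd Z) ≫
        phihat D t LL adj N d hd ((N : A ⥤ A).obj Z) ≫ muNS D t N d hd Z := by
  apply hom_ext_unit D t LL adj
  have htri : adj.unit.app ((U D t).obj (LL.obj Z)) ≫
      (U D t).map (adj.counit.app (LL.obj Z)) = 𝟙 ((U D t).obj (LL.obj Z)) :=
    adj.right_triangle_components (LL.obj Z)
  have hu : phiapp D t LL adj N d hd Z ≫ adj.unit.app ((N : A ⥤ A).obj Z)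
      = adj.unit.app ((U D t).obj (LL.obj Z)) ≫
        (U D t).map (LL.map (phiapp D t LL adj N d hd Z)) :=
    adj.unit.naturality _
  show adj.unit.app ((U D t).obj (LL.obj Z)) ≫
      (U D t).map (adj.counit.app (LL.obj Z)) ≫ phiapp D t LL adj N d hd Z
      = adj.unit.app ((U D t).obj (LL.obj Z)) ≫
        (U D t).map (LL.map (phiapp D t LL adj N d hd Z)) ≫
        phiapp D t LL adj N d hd ((N : A ⥤ A).obj Z) ≫ N.μ.app Z
  rw [reassoc_of% htri]
  rw [← Category.assoc, ← hu, Category.assoc, ← Category.assoc (adj.unit.app _), unit_phihat]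
  have hlu : N.η.app ((N : A ⥤ A).obj Z) ≫ N.μ.app Z = 𝟙 _ := N.left_unit Z
  rw [hlu]
  simp

/-- The descent monad morphism. -/
noncomputable def descHom : adj.toMonad ⟶ N where
  app Z := phiapp D t LL adj N d hd Z
  naturality _ _ φ := phi_nat D t LL adj N d hd φ
  app_η Z := unit_phihat D t LL adj N d hd Z
  app_μ Z := by
    have h := congrArg (fun q => (U D t).map q) (phihat_mu D t LL adj N d hd Z)
    simp only [Functor.map_comp] at h
    rw [← Category.assoc] at h
    exact h

lemma fac_capp (i : J) (Z : A) :
    capp D t g LL adj i Z ≫ phiapp D t LL adj N d hd Z = (d i).app Z := by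
  have hgn : ((D.obj i) : A ⥤ A).map (phiapp D t LL adj N d hd Z) ≫
      (D.map (g i)).app ((N : A ⥤ A).obj Z)
      = (D.map (g i)).app ((U D t).obj (LL.obj Z)) ≫
        ((D.obj t) : A ⥤ A).map (phiapp D t LL adj N d hd Z) :=
    (D.map (g i)).naturality _
  have hgd := d_app_comp D N d hd (g i) ((N : A ⥤ A).obj Z)
  have hdn : ((D.obj i) : A ⥤ A).map (N.η.app Z) ≫ (d i).app ((N : A ⥤ A).obj Z)
      = (d i).app Z ≫ (N : A ⥤ A).map (N.η.app Z) := (d i).naturality _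
  have hru : (N : A ⥤ A).map (N.η.app Z) ≫ N.μ.app Z = 𝟙 _ := N.right_unit Z
  simp only [capp, Category.assoc]
  rw [← phihat_alg, ← reassoc_of% hgn, ← Functor.map_comp_assoc, unit_phihat,
    reassoc_of% hgd, ← Category.assoc, hdn, Category.assoc, hru]
  simp

lemma tau_eq (Z : A) :
    capp D t g LL adj t ((U D t).obj (LL.obj Z)) ≫
      (U D t).map (adj.counit.app (LL.obj Z)) = tau D t LL Z := by
  have hone : (D.map (𝟙 t)).app
      ((U D t).obj (LL.obj ((U D t).obj (LL.obj Z)))) = 𝟙 _ := by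
    rw [D.map_id]; rfl
  have hP : (D.map (g t)).app ((U D t).obj (LL.obj ((U D t).obj (LL.obj Z)))) ≫
      tau D t LL ((U D t).obj (LL.obj Z))
      = (D.map (𝟙 t)).app ((U D t).obj (LL.obj ((U D t).obj (LL.obj Z)))) ≫
        tau D t LL ((U D t).obj (LL.obj Z)) :=
    (LL.obj ((U D t).obj (LL.obj Z))).property t (g t) (𝟙 t)
  have hP' : (D.map (g t)).app ((U D t).obj (LL.obj ((U D t).obj (LL.obj Z)))) ≫
      tau D t LL ((U D t).obj (LL.obj Z))
      = tau D t LL ((U D t).obj (LL.obj Z)) := by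
    rw [hP, hone, Category.id_comp]
  have hcounit := counit_alg D t LL adj Z
  have htri : adj.unit.app ((U D t).obj (LL.obj Z)) ≫
      (U D t).map (adj.counit.app (LL.obj Z)) = 𝟙 ((U D t).obj (LL.obj Z)) :=
    adj.right_triangle_components (LL.obj Z)
  simp only [capp, Category.assoc]
  rw [reassoc_of% hP', ← hcounit, ← Functor.map_comp_assoc, htri]
  simp

lemma psi_alg (ψ : adj.toMonad ⟶ N) (hψ : ∀ i : J, cHom D t g LL adj i ≫ ψ = d i) (Z : A) :
    ((D.obj t) : A ⥤ A).map (ψ.app Z) ≫ ((d t).app ((N : A ⥤ A).obj Z) ≫ N.μ.app Z)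
      = tau D t LL Z ≫ ψ.app Z := by
  have hψμ : (U D t).map (adj.counit.app (LL.obj Z)) ≫ ψ.app Z
      = ((U D t).map (LL.map (ψ.app Z)) ≫ ψ.app ((N : A ⥤ A).obj Z)) ≫ N.μ.app Z :=
    ψ.app_μ Z
  have hcn : ((D.obj t) : A ⥤ A).map (ψ.app Z) ≫ capp D t g LL adj t ((N : A ⥤ A).obj Z)
      = capp D t g LL adj t ((U D t).obj (LL.obj Z)) ≫ (U D t).map (LL.map (ψ.app Z)) :=
    capp_nat D t g LL adj t (ψ.app Z)
  have hψt : capp D t g LL adj t ((N : A ⥤ A).obj Z) ≫ ψ.app ((N : A ⥤ A).obj Z)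
      = (d t).app ((N : A ⥤ A).obj Z) := by
    have h2 : (cHom D t g LL adj t ≫ ψ).app ((N : A ⥤ A).obj Z)
        = (d t).app ((N : A ⥤ A).obj Z) := by rw [hψ t]
    exact h2
  calc @Eq (((D.obj t) : A ⥤ A).obj ((U D t).obj (LL.obj Z)) ⟶ (N : A ⥤ A).obj Z)
          (((D.obj t) : A ⥤ A).map (ψ.app Z) ≫ ((d t).app ((N : A ⥤ A).obj Z) ≫ N.μ.app Z))
          (((D.obj t) : A ⥤ A).map (ψ.app Z) ≫ capp D t g LL adj t ((N : A ⥤ A).obj Z) ≫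
          ψ.app ((N : A ⥤ A).obj Z) ≫ N.μ.app Z) := by
        erw [← reassoc_of% hψt]
        exact congrArg (fun q => ((D.obj t) : A ⥤ A).map (ψ.app Z) ≫ q) (Category.assoc _ _ _)
    _ = capp D t g LL adj t ((U D t).obj (LL.obj Z)) ≫ (U D t).map (LL.map (ψ.app Z)) ≫
          ψ.app ((N : A ⥤ A).obj Z) ≫ N.μ.app Z := by
          erw [reassoc_of% hcn]; exact Category.assoc _ _ _
    _ = capp D t g LL adj t ((U D t).obj (LL.obj Z)) ≫
          (U D t).map (adj.counit.app (LL.obj Z)) ≫ ψ.app Z := by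
        erw [hψμ]
        exact congrArg (fun q => capp D t g LL adj t ((U D t).obj (LL.obj Z)) ≫ q)
          (Category.assoc _ _ _).symm
    _ = tau D t LL Z ≫ ψ.app Z := by erw [← Category.assoc, tau_eq]

lemma psi_eq_phi (ψ : adj.toMonad ⟶ N) (hψ : ∀ i : J, cHom D t g LL adj i ≫ ψ = d i)
    (Z : A) : ψ.app Z = phiapp D t LL adj N d hd Z := by
  have hψη : adj.unit.app Z ≫ ψ.app Z = N.η.app Z := ψ.app_η Z
  have hΨ : ({ hom := { f := ψ.app Z, h := psi_alg D t g LL adj N d ψ hψ Z } } :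
      LL.obj Z ⟶ NAlgS D t N d hd Z) = phihat D t LL adj N d hd Z := by
    apply hom_ext_unit D t LL adj
    show adj.unit.app Z ≫ ψ.app Z = adj.unit.app Z ≫ phiapp D t LL adj N d hd Z
    rw [hψη, unit_phihat]
  exact congrArg (fun q => q.hom.f) hΨ

end Desc

section IsColim

variable {J : Type v} [SmallCategory J] (D : J ⥤ Monad A) (t : J) (g : ∀ i : J, i ⟶ t)
variable (LL : A ⥤ S D t) (adj : LL ⊣ U D t)

/-- The cocone `coconeD` is a colimit. -/
noncomputable def isColimitCoconeD : IsColimit (coconeD D t g LL adj) where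
  desc sc := descHom D t LL adj sc.pt (fun i => sc.ι.app i) (fun {_ _} u => sc.w u)
  fac sc i := by
    apply MonadHom.ext'
    funext Z
    exact fac_capp D t g LL adj sc.pt (fun i => sc.ι.app i) (fun {_ _} u => sc.w u) i Z
  uniq sc m hm := by
    apply MonadHom.ext'
    funext Z
    exact psi_eq_phi D t g LL adj sc.pt (fun i => sc.ι.app i) (fun {_ _} u => sc.w u) m hm Z

end IsColim


lemma hasColimit_of_weaklyTerminal {A : Type u} [Category.{v} A] [HasLimits A] [HasColimits A]
    (hsplit : ∀ {X Y : A} (f : X ⟶ Y), StrongEpi f → IsSplitEpi f)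
    {J : Type v} [SmallCategory J] (D : J ⥤ Monad A)
    (hW : ∃ j : J, ∀ i : J, Nonempty (i ⟶ j)) : HasColimit D := by
  obtain ⟨t, ht⟩ := hW
  have g : ∀ i : J, i ⟶ t := fun i => (ht i).some
  haveI := U_isRightAdjoint D t hsplit
  exact HasColimit.mk ⟨coconeD D t g _ (Adjunction.ofIsRightAdjoint (U D t)),
    isColimitCoconeD D t g _ (Adjunction.ofIsRightAdjoint (U D t))⟩

end Stmt11Scratch

/-- Let `A` be complete and cocomplete with stable monomorphisms and split (strong)
epimorphisms. Every (small) diagram in `Monad A` possessing a weakly terminal object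
has a colimit; in particular `Monad A` has coequalizers. -/
theorem stmt11 (A : Type u) [Category.{v} A] [HasLimits A] [HasColimits A]
    (hst : StableMonos A)
    (hsplit : ∀ {X Y : A} (f : X ⟶ Y), StrongEpi f → IsSplitEpi f) :
    (∀ (J : Type v) [SmallCategory J] (D : J ⥤ Monad A),
      (∃ j : J, ∀ i : J, Nonempty (i ⟶ j)) → HasColimit D) ∧
    HasCoequalizers (Monad A) := by
  have h1 : ∀ (J : Type v) [SmallCategory J] (D : J ⥤ Monad A),
      (∃ j : J, ∀ i : J, Nonempty (i ⟶ j)) → HasColimit D :=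
    fun J _ D hW => Stmt11Scratch.hasColimit_of_weaklyTerminal @hsplit D hW
  refine ⟨h1, ?_⟩
  haveI : HasColimitsOfShape (ULiftHom.{v} (ULift.{v} WalkingParallelPair)) (Monad A) := by
    constructor
    intro F
    apply h1
    refine ⟨ULiftHom.objUp ⟨WalkingParallelPair.one⟩, ?_⟩
    intro i
    refine ⟨ULift.up ?_⟩
    show i.objDown.down ⟶ WalkingParallelPair.one
    generalize i.objDown.down = x
    cases x
    · exact WalkingParallelPairHom.left
    · exact 𝟙 _
  exact hasColimitsOfShape_of_equivalence
    ((ULift.equivalence.trans ULiftHom.equiv).symm)
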